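/- Let R be a commutative Noetherian ring and N = M₀ ⊂ ⋯ ⊂ M_{i-1} ⊂^{p_i} M_i ⊂^{p_{i+1}} M_{i+1} ⊂ ⋯ ⊂ Mₙ = M a regular prime extension filtration of a finitely generated module M over a proper submodule N. If p_{i+1} ⊄ p_i, then there exists a submodule K_i of M such that N = M₀ ⊂ ⋯ ⊂ M_{i-1} ⊂^{p_{i+1}} K_i ⊂^{p_i} M_{i+1} ⊂ ⋯ ⊂ Mₙ = M is again a regular prime extension filtration of M over N. -/

import Mathlib

variable {R : Type*} [CommRing R] {M : Type*} [AddCommGroup M] [Module R M]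

/-- The colon submodule `(N :_M I) = {x ∈ M | I • x ⊆ N}`. -/
def colonSubmodule (N : Submodule R M) (I : Ideal R) : Submodule R M where
  carrier := {x | ∀ a ∈ I, a • x ∈ N}
  add_mem' := fun hx hy a ha => by simpa [smul_add] using N.add_mem (hx a ha) (hy a ha)
  zero_mem' := fun a _ => by simp
  smul_mem' := fun c x hx a ha => by
    rw [smul_comm]
    exact N.smul_mem c (hx a ha)

/-- `K` is a `p`-prime extension of `N`, i.e. `N` is a `p`-prime submodule of `K`. -/
def IsPrimeExt (p : Ideal R) (N K : Submodule R M) : Prop :=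
  N < K ∧ N.colon K = p ∧ ∀ a : R, ∀ x ∈ K, a • x ∈ N → x ∈ N ∨ a ∈ p

/-- The associated primes of `T / N` for submodules `N ≤ T ≤ M`. -/
def assOf (R : Type*) {M : Type*} [CommRing R] [AddCommGroup M] [Module R M]
    (N T : Submodule R M) : Set (Ideal R) :=
  associatedPrimes R ↥(T.map N.mkQ)

/-- `K` is a maximal `p`-prime extension of `N` inside `T`. -/
def IsMaximalPrimeExtIn (T : Submodule R M) (p : Ideal R) (N K : Submodule R M) : Prop :=
  K ≤ T ∧ IsPrimeExt p N K ∧ ∀ L ≤ T, IsPrimeExt p N L → ¬ K < L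

/-- `K` is a regular `p`-prime extension of `N` inside `T`: a maximal `p`-prime
extension where `p` is a maximal element of `Ass (T/N)`. -/
def IsRegularPrimeExtIn (T : Submodule R M) (p : Ideal R) (N K : Submodule R M) : Prop :=
  IsMaximalPrimeExtIn T p N K ∧ Maximal (· ∈ assOf R N T) p

/-- A regular prime extension (RPE) filtration inside `T` with primes `p i`. -/
def IsRPEFiltrationIn (T : Submodule R M) {n : ℕ}
    (F : Fin (n + 1) → Submodule R M) (p : Fin n → Ideal R) : Prop :=
  ∀ i : Fin n, IsRegularPrimeExtIn T (p i) (F i.castSucc) (F i.succ)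

/-- The generalized prime ideal factorization of `N` in `T` is given by the multiset `s`:
there is an RPE filtration of `T` over `N` whose multiset of primes is `s`. -/
def HasGPIF (N T : Submodule R M) (s : Multiset (Ideal R)) : Prop :=
  ∃ (n : ℕ) (F : Fin (n + 1) → Submodule R M) (p : Fin n → Ideal R),
    F 0 = N ∧ F (Fin.last n) = T ∧ IsRPEFiltrationIn T F p ∧ (List.ofFn p : Multiset (Ideal R)) = s

section Aux
variable {R : Type*} [CommRing R] {M : Type*} [AddCommGroup M] [Module R M]

lemma mem_colonSubmodule {N : Submodule R M} {q : Ideal R} {x : M} :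
    x ∈ colonSubmodule N q ↔ ∀ a ∈ q, a • x ∈ N := Iff.rfl

lemma le_colonSubmodule {N : Submodule R M} {q : Ideal R} : N ≤ colonSubmodule N q :=
  fun x hx a _ => N.smul_mem a hx

lemma colonSubmodule_comm (N : Submodule R M) (p q : Ideal R) :
    colonSubmodule (colonSubmodule N p) q = colonSubmodule (colonSubmodule N q) p := by
  ext x
  simp only [mem_colonSubmodule]
  constructor <;> intro h a ha b hb
  · simpa [smul_smul, mul_comm] using h b hb a ha
  · simpa [smul_smul, mul_comm] using h b hb a ha

lemma assOf_top_eq (N : Submodule R M) : assOf R N ⊤ = associatedPrimes R (M ⧸ N) := by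
  unfold assOf
  exact LinearEquiv.AssociatedPrimes.eq
    ((LinearEquiv.ofEq _ _ (by rw [Submodule.map_top, Submodule.range_mkQ])).trans
      Submodule.topEquiv)

lemma maximal_assOf_top_iff {N : Submodule R M} {p : Ideal R} :
    Maximal (· ∈ assOf R N ⊤) p ↔ Maximal (· ∈ associatedPrimes R (M ⧸ N)) p := by
  rw [show (· ∈ assOf R N ⊤) = (· ∈ associatedPrimes R (M ⧸ N)) from
    funext fun q => by rw [assOf_top_eq]]

lemma mem_assQ_iff [IsNoetherianRing R] {N : Submodule R M} {q : Ideal R} :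
    q ∈ associatedPrimes R (M ⧸ N) ↔
      q.IsPrime ∧ ∃ x : M, ∀ r : R, r ∈ q ↔ r • x ∈ N := by
  rw [AssociatedPrimes.mem_iff, isAssociatedPrime_iff]
  refine and_congr_right fun hq => ?_
  constructor
  · rintro ⟨xb, rfl⟩
    obtain ⟨x, rfl⟩ := Submodule.Quotient.mk_surjective N xb
    refine ⟨x, fun r => ?_⟩
    rw [Submodule.mem_colon_singleton, Submodule.mem_bot, ← Submodule.Quotient.mk_smul,
      Submodule.Quotient.mk_eq_zero]
  · rintro ⟨x, hx⟩
    refine ⟨Submodule.Quotient.mk x, ?_⟩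
    ext r
    rw [Submodule.mem_colon_singleton, Submodule.mem_bot, ← Submodule.Quotient.mk_smul,
      Submodule.Quotient.mk_eq_zero]
    exact hx r

variable [IsNoetherianRing R]

/-- The annihilator ideal of a nonzero element of `M ⧸ N` is contained in an
associated prime of `M ⧸ N`. -/
lemma ord_le_assQ (N : Submodule R M) {x : M} (hx : x ∉ N) :
    ∃ P ∈ associatedPrimes R (M ⧸ N), ∀ r : R, r • x ∈ N → r ∈ P := by
  have hx' : (Submodule.Quotient.mk x : M ⧸ N) ≠ 0 := by
    rwa [Ne, Submodule.Quotient.mk_eq_zero]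
  obtain ⟨P, hP, hle⟩ :=
    exists_le_isAssociatedPrime_of_isNoetherianRing R (Submodule.Quotient.mk x : M ⧸ N) hx'
  refine ⟨P, hP, fun r hr => hle ?_⟩
  rw [Submodule.mem_colon_singleton, Submodule.mem_bot, ← Submodule.Quotient.mk_smul,
    Submodule.Quotient.mk_eq_zero]
  exact hr

/-- If `p` is maximal in `Ass(M/N)` and `x ∈ (N : p) \ N`, then the annihilator
of `x` mod `N` is exactly `p`. -/
lemma ann_eq_of_mem_colon {N : Submodule R M} {p : Ideal R}
    (hp : Maximal (· ∈ associatedPrimes R (M ⧸ N)) p) {x : M}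
    (hxN : x ∉ N) (hxC : x ∈ colonSubmodule N p) :
    ∀ r : R, r • x ∈ N ↔ r ∈ p := by
  obtain ⟨P, hPass, hPle⟩ := ord_le_assQ N hxN
  have hpP : p ≤ P := fun a ha => hPle a (hxC a ha)
  have hPp : P ≤ p := hp.2 hPass hpP
  exact fun r => ⟨fun h => hPp (hPle r h), fun h => hxC r h⟩

end Aux
section Aux2
variable {R : Type*} [CommRing R] [IsNoetherianRing R]
  {M : Type*} [AddCommGroup M] [Module R M]

/-- If `p` is maximal in `Ass(M/N)`, then `(N : p)` is a regular `p`-prime extension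
of `N` in `M`. -/
lemma isRegularPrimeExtIn_colon {N : Submodule R M} {p : Ideal R}
    (hp : Maximal (· ∈ associatedPrimes R (M ⧸ N)) p) :
    IsRegularPrimeExtIn ⊤ p N (colonSubmodule N p) := by
  obtain ⟨hprime, x, hx⟩ := mem_assQ_iff.mp hp.1
  have hxC : x ∈ colonSubmodule N p := fun a ha => (hx a).mp ha
  have hxN : x ∉ N := fun h => hprime.ne_top (Ideal.eq_top_iff_one _ |>.mpr
    ((hx 1).mpr (by simpa using N.smul_mem 1 h)))
  have hne : N < colonSubmodule N p := lt_of_le_of_ne le_colonSubmodule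
    (fun h => hxN (h ▸ hxC))
  have hcolon : N.colon (colonSubmodule N p) = p := by
    ext r
    rw [Submodule.mem_colon]
    constructor
    · intro h
      exact (hx r).mpr (h x hxC)
    · intro hr y hy
      exact hy r hr
  have hprimeext : IsPrimeExt p N (colonSubmodule N p) := by
    refine ⟨hne, hcolon, fun a y hy hay => ?_⟩
    by_cases hyN : y ∈ N
    · exact Or.inl hyN
    · exact Or.inr ((ann_eq_of_mem_colon hp hyN hy a).mp hay)
  refine ⟨⟨le_top, hprimeext, fun L _ hL hlt => ?_⟩, maximal_assOf_top_iff.mpr hp⟩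
  have hLle : L ≤ colonSubmodule N p := by
    intro y hy a ha
    have : a ∈ N.colon L := hL.2.1 ▸ ha
    exact Submodule.mem_colon.mp this y hy
  exact absurd hlt (not_lt_of_ge hLle)

/-- Uniqueness: any maximal `p`-prime extension of `N` equals `(N : p)` when `p` is
maximal in `Ass(M/N)`. -/
lemma eq_colon_of_isMaximalPrimeExtIn {N K : Submodule R M} {p : Ideal R}
    (hp : Maximal (· ∈ associatedPrimes R (M ⧸ N)) p)
    (hK : IsMaximalPrimeExtIn ⊤ p N K) : K = colonSubmodule N p := by
  have hKle : K ≤ colonSubmodule N p := by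
    intro y hy a ha
    have : a ∈ N.colon K := hK.2.1.2.1 ▸ ha
    exact Submodule.mem_colon.mp this y hy
  rcases hKle.lt_or_eq with hlt | heq
  · exact absurd hlt (hK.2.2 _ le_top (isRegularPrimeExtIn_colon hp).1.2.1)
  · exact heq

end Aux2
section Aux3
variable {R : Type*} [CommRing R] [IsNoetherianRing R]
  {M : Type*} [AddCommGroup M] [Module R M]

/-- Key transfer lemma: if `p` is maximal in `Ass(M/N)`, `q` is a prime which occurs as
the annihilator of an element of `M/(N : p)` and `q ⊄ p`, then `q` occurs as the
annihilator of an element of `M/N`. -/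
lemma exists_ann_eq_of_ann_eq_colon {N : Submodule R M} {p q : Ideal R}
    (hp : Maximal (· ∈ associatedPrimes R (M ⧸ N)) p) (hq : q.IsPrime) {x : M}
    (hx : ∀ r : R, r ∈ q ↔ r • x ∈ colonSubmodule N p) (hqp : ¬ q ≤ p) :
    ∃ y : M, ∀ r : R, r ∈ q ↔ r • y ∈ N := by
  obtain ⟨a, haq, hap⟩ := SetLike.not_le_iff_exists.mp hqp
  have hxG : x ∉ colonSubmodule N p := fun h =>
    hq.ne_top (Ideal.eq_top_iff_one _ |>.mpr ((hx 1).mpr (by simpa using h)))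
  -- step (a): ¬ p ≤ q
  have hpq : ¬ p ≤ q := by
    intro hpq
    apply hxG
    intro c hc
    by_contra hcxN
    have hcxG : c • x ∈ colonSubmodule N p := (hx c).mp (hpq hc)
    have hann := ann_eq_of_mem_colon hp hcxN hcxG
    have haxG : a • x ∈ colonSubmodule N p := (hx a).mp haq
    have : a • c • x ∈ N := by
      rw [smul_comm]
      exact haxG c hc
    exact hap ((hann a).mp this)
  -- step (b): produce the witness `c • x` with `c ∈ p \ q`
  obtain ⟨c, hcp, hcq⟩ := SetLike.not_le_iff_exists.mp hpq
  refine ⟨c • x, fun r => ⟨fun hr => ?_, fun hr => ?_⟩⟩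
  · have : r • x ∈ colonSubmodule N p := (hx r).mp hr
    rw [smul_comm]
    exact this c hcp
  · have h1 : (r * c) • x ∈ colonSubmodule N p := by
      rw [mul_smul]
      exact le_colonSubmodule hr
    have h2 : r * c ∈ q := (hx _).mpr h1
    rcases hq.mem_or_mem h2 with h | h
    · exact h
    · exact absurd h hcq

/-- If `p` is maximal in `Ass(M/N)`, `q` is maximal in `Ass(M/(N : p))` and `q ⊄ p`,
then `q` is maximal in `Ass(M/N)`. -/
lemma maximal_of_maximal_colon {N : Submodule R M} {p q : Ideal R}
    (hp : Maximal (· ∈ associatedPrimes R (M ⧸ N)) p)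
    (hq : Maximal (· ∈ associatedPrimes R (M ⧸ (colonSubmodule N p))) q)
    (hqp : ¬ q ≤ p) :
    Maximal (· ∈ associatedPrimes R (M ⧸ N)) q := by
  obtain ⟨hqprime, x, hx⟩ := mem_assQ_iff.mp hq.1
  obtain ⟨y, hy⟩ := exists_ann_eq_of_ann_eq_colon hp hqprime hx hqp
  refine ⟨mem_assQ_iff.mpr ⟨hqprime, y, hy⟩, ?_⟩
  intro q' hq' hle
  obtain ⟨hq'prime, z, hz⟩ := mem_assQ_iff.mp hq'
  have hzN : z ∉ N := fun h =>
    hq'prime.ne_top (Ideal.eq_top_iff_one _ |>.mpr ((hz 1).mpr (by simpa using h)))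
  by_cases hzG : z ∈ colonSubmodule N p
  · have hann := ann_eq_of_mem_colon hp hzN hzG
    exact absurd (fun r hr => (hann r).mp ((hz r).mp (hle hr))) hqp
  · obtain ⟨P, hP, hPle⟩ := ord_le_assQ (colonSubmodule N p) hzG
    have hq'P : q' ≤ P := fun r hr => hPle r (le_colonSubmodule ((hz r).mp hr))
    have : P ≤ q := hq.2 hP (hle.trans hq'P)
    exact hq'P.trans this

/-- If `p` is maximal in `Ass(M/N)`, `q` is maximal in `Ass(M/(N : p))` and `q ⊄ p`,
then `p` is maximal in `Ass(M/(N : q))`. -/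
lemma maximal_over_colon_swap {N : Submodule R M} {p q : Ideal R}
    (hp : Maximal (· ∈ associatedPrimes R (M ⧸ N)) p)
    (hq : Maximal (· ∈ associatedPrimes R (M ⧸ (colonSubmodule N p))) q)
    (hqp : ¬ q ≤ p) :
    Maximal (· ∈ associatedPrimes R (M ⧸ (colonSubmodule N q))) p := by
  have hqN : Maximal (· ∈ associatedPrimes R (M ⧸ N)) q := maximal_of_maximal_colon hp hq hqp
  have hpq : ¬ p ≤ q := fun h => hqp (hp.2 hqN.1 h)
  obtain ⟨a, haq, hap⟩ := SetLike.not_le_iff_exists.mp hqp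
  obtain ⟨hpprime, u, hu⟩ := mem_assQ_iff.mp hp.1
  constructor
  · refine mem_assQ_iff.mpr ⟨hpprime, u, fun r => ⟨fun hr => le_colonSubmodule ((hu r).mp hr),
      fun hr => ?_⟩⟩
    have : (a * r) • u ∈ N := by
      rw [mul_smul]
      exact hr a haq
    rcases hpprime.mem_or_mem ((hu _).mpr this) with h | h
    · exact absurd h hap
    · exact h
  · intro p' hp' hle
    obtain ⟨hp'prime, w, hw⟩ := mem_assQ_iff.mp hp'
    have hnp'q : ¬ p' ≤ q := fun h => hpq (hle.trans h)
    obtain ⟨y, hy⟩ := exists_ann_eq_of_ann_eq_colon hqN hp'prime hw hnp'q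
    exact hp.2 (mem_assQ_iff.mpr ⟨hp'prime, y, hy⟩) hle

end Aux3
/-- Interchange lemma: if in an RPE filtration `p (i+1) ⊄ p i`, then the two consecutive
regular prime extensions can be interchanged, replacing the middle term `F (i+1)` by a
suitable submodule `K`. -/
theorem rpe_filtration_interchange {R : Type*} [CommRing R] [IsNoetherianRing R]
    {M : Type*} [AddCommGroup M] [Module R M] [Module.Finite R M]
    {n : ℕ} (N : Submodule R M) (hN : N ≠ ⊤)
    (F : Fin (n + 1) → Submodule R M) (p : Fin n → Ideal R)
    (h0 : F 0 = N) (hlast : F (Fin.last n) = ⊤) (hF : IsRPEFiltrationIn ⊤ F p)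
    (i : Fin n) (hi : (i : ℕ) + 1 < n)
    (hsub : ¬ p ⟨(i : ℕ) + 1, hi⟩ ≤ p i) :
    ∃ K : Submodule R M,
      IsRPEFiltrationIn ⊤ (Function.update F i.succ K)
        (fun j => if j = i then p ⟨(i : ℕ) + 1, hi⟩
          else if j = ⟨(i : ℕ) + 1, hi⟩ then p i else p j) := by
  set i1 : Fin n := ⟨(i : ℕ) + 1, hi⟩ with hi1def
  have hi1i : i1 ≠ i := by
    simp only [hi1def, Ne, Fin.ext_iff, Fin.val_mk]
    omega
  have hcast : i1.castSucc = i.succ := by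
    apply Fin.ext
    simp [hi1def]
  have h_i := hF i
  have h_i1 := hF i1
  set N₀ := F i.castSucc with hN₀
  -- `p i` is maximal in `Ass(M/N₀)` and `F i.succ = (N₀ : p i)`
  have hpmax : Maximal (· ∈ associatedPrimes R (M ⧸ N₀)) (p i) :=
    maximal_assOf_top_iff.mp h_i.2
  have hM₁ : F i.succ = colonSubmodule N₀ (p i) :=
    eq_colon_of_isMaximalPrimeExtIn hpmax h_i.1
  -- `p i1` is maximal in `Ass(M/(N₀ : p i))` and `F i1.succ = ((N₀ : p i) : p i1)`
  have hqmaxM₁ : Maximal (· ∈ associatedPrimes R (M ⧸ (F i1.castSucc))) (p i1) :=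
    maximal_assOf_top_iff.mp h_i1.2
  have hqmaxG : Maximal (· ∈ associatedPrimes R (M ⧸ (colonSubmodule N₀ (p i)))) (p i1) := by
    rwa [hcast, hM₁] at hqmaxM₁
  have hM₂ : F i1.succ = colonSubmodule (colonSubmodule N₀ (p i)) (p i1) := by
    have := eq_colon_of_isMaximalPrimeExtIn hqmaxM₁ h_i1.1
    rwa [hcast, hM₁] at this
  -- the swapped data
  have hqmaxN : Maximal (· ∈ associatedPrimes R (M ⧸ N₀)) (p i1) :=
    maximal_of_maximal_colon hpmax hqmaxG hsub
  set K : Submodule R M := colonSubmodule N₀ (p i1) with hK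
  have hstep1 : IsRegularPrimeExtIn ⊤ (p i1) N₀ K := isRegularPrimeExtIn_colon hqmaxN
  have hpmaxK : Maximal (· ∈ associatedPrimes R (M ⧸ K)) (p i) :=
    maximal_over_colon_swap hpmax hqmaxG hsub
  have hstep2 : IsRegularPrimeExtIn ⊤ (p i) K (F i1.succ) := by
    have := isRegularPrimeExtIn_colon hpmaxK
    rwa [hK, ← colonSubmodule_comm, ← hM₂] at this
  refine ⟨K, fun j => ?_⟩
  beta_reduce
  by_cases hji : j = i
  · subst hji
    rw [if_pos rfl, Function.update_of_ne (Fin.castSucc_lt_succ (i := j)).ne,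
      Function.update_self]
    exact hstep1
  · by_cases hji1 : j = i1
    · subst hji1
      rw [if_neg hji, if_pos rfl, hcast, Function.update_self,
        Function.update_of_ne (by simp only [hi1def, Ne, Fin.ext_iff, Fin.val_succ, Fin.val_mk]; omega)]
      exact hstep2
    · have h1 : j.castSucc ≠ i.succ := by
        rw [← hcast]
        exact fun h => hji1 (Fin.castSucc_injective _ h)
      have h2 : j.succ ≠ i.succ := fun h => hji (Fin.succ_injective _ h)
      rw [if_neg hji, if_neg hji1, Function.update_of_ne h1, Function.update_of_ne h2]
      exact hF j
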